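/- Let P and Q be Borel probability measures on ℝⁿ with finite second moments. Then ∫∫ ‖x − y‖² dP(x) dQ(y) − (1/2) ∫∫ ‖x − x'‖² dP(x) dP(x') − (1/2) ∫∫ ‖y − y'‖² dQ(y) dQ(y') = ‖∫ x dP(x) − ∫ y dQ(y)‖², where ‖·‖ is the Euclidean norm. Consequently, the squared energy distance with exponent q = 2 between P and Q equals the squared Euclidean distance between the mean of P and the mean of Q. -/

import Mathlib

open MeasureTheory

variable {n : ℕ}

private lemma integrable_id' (μ : Measure (EuclideanSpace ℝ (Fin n)))
    [IsProbabilityMeasure μ] (hμ : Integrable (fun x => ‖x‖ ^ 2) μ) :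
    Integrable (fun x : EuclideanSpace ℝ (Fin n) => x) μ := by
  refine Integrable.mono' (g := fun x => 1 + ‖x‖ ^ 2)
    ((integrable_const 1).add hμ) aestronglyMeasurable_id ?_
  filter_upwards with x
  nlinarith [norm_nonneg x, sq_nonneg (‖x‖ - 1)]

private lemma key (μ ν : Measure (EuclideanSpace ℝ (Fin n)))
    [IsProbabilityMeasure μ] [IsProbabilityMeasure ν]
    (hμ : Integrable (fun x => ‖x‖ ^ 2) μ) (hν : Integrable (fun y => ‖y‖ ^ 2) ν) :
    (∫ x, ∫ y, ‖x - y‖ ^ 2 ∂ν ∂μ)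
      = (∫ x, ‖x‖ ^ 2 ∂μ) + (∫ y, ‖y‖ ^ 2 ∂ν)
        - 2 * (inner ℝ (∫ x, x ∂μ) (∫ y, y ∂ν) : ℝ) := by
  have hidμ := integrable_id' μ hμ
  have hidν := integrable_id' ν hν
  have hinner : ∀ x : EuclideanSpace ℝ (Fin n),
      ∫ y, (inner ℝ x y : ℝ) ∂ν = inner ℝ x (∫ y, y ∂ν) :=
    fun x => integral_inner hidν x
  have step1 : ∀ x : EuclideanSpace ℝ (Fin n),
      ∫ y, ‖x - y‖ ^ 2 ∂ν
        = ‖x‖ ^ 2 - 2 * (inner ℝ x (∫ y, y ∂ν) : ℝ) + ∫ y, ‖y‖ ^ 2 ∂ν := by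
    intro x
    have : ∀ y : EuclideanSpace ℝ (Fin n),
        ‖x - y‖ ^ 2 = ‖x‖ ^ 2 - 2 * (inner ℝ x y : ℝ) + ‖y‖ ^ 2 :=
      fun y => norm_sub_sq_real x y
    rw [integral_congr_ae (Filter.Eventually.of_forall this)]
    have h2 : Integrable (fun y : EuclideanSpace ℝ (Fin n) =>
        2 * (inner ℝ x y : ℝ)) ν := (hidν.const_inner x).const_mul 2
    have h1 : Integrable (fun y : EuclideanSpace ℝ (Fin n) =>
        ‖x‖ ^ 2 - 2 * (inner ℝ x y : ℝ)) ν := (integrable_const _).sub h2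
    rw [integral_add h1 hν, integral_sub (integrable_const _) h2,
      integral_const, integral_const_mul, hinner x]
    simp
  rw [integral_congr_ae (Filter.Eventually.of_forall step1)]
  have hin : Integrable (fun x : EuclideanSpace ℝ (Fin n) =>
      (inner ℝ x (∫ y, y ∂ν) : ℝ)) μ := by
    have := hidμ.const_inner (𝕜 := ℝ) (∫ y, y ∂ν)
    refine this.congr ?_
    filter_upwards with x using real_inner_comm _ _
  have g2 : Integrable (fun x : EuclideanSpace ℝ (Fin n) =>
      2 * (inner ℝ x (∫ y, y ∂ν) : ℝ)) μ := hin.const_mul 2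
  have g1 : Integrable (fun x : EuclideanSpace ℝ (Fin n) =>
      ‖x‖ ^ 2 - 2 * (inner ℝ x (∫ y, y ∂ν) : ℝ)) μ := hμ.sub g2
  rw [integral_add g1 (integrable_const _),
    integral_sub hμ g2, integral_const_mul, integral_const]
  have : ∫ x, (inner ℝ x (∫ y, y ∂ν) : ℝ) ∂μ
      = inner ℝ (∫ x, x ∂μ) (∫ y, y ∂ν) := by
    rw [real_inner_comm]
    rw [← integral_inner hidμ]
    exact integral_congr_ae (Filter.Eventually.of_forall fun x => real_inner_comm _ _)
  rw [this]
  simp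
  ring

theorem stmt8 {n : ℕ} (P Q : Measure (EuclideanSpace ℝ (Fin n)))
    [IsProbabilityMeasure P] [IsProbabilityMeasure Q]
    (hP : Integrable (fun x => ‖x‖ ^ 2) P)
    (hQ : Integrable (fun y => ‖y‖ ^ 2) Q) :
    (∫ x, ∫ y, ‖x - y‖ ^ 2 ∂Q ∂P)
      - (1 / 2) * (∫ x, ∫ x', ‖x - x'‖ ^ 2 ∂P ∂P)
      - (1 / 2) * (∫ y, ∫ y', ‖y - y'‖ ^ 2 ∂Q ∂Q)
      = ‖(∫ x, x ∂P) - ∫ y, y ∂Q‖ ^ 2 := by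
  rw [key P Q hP hQ, key P P hP hP, key Q Q hQ hQ, norm_sub_sq_real,
    real_inner_self_eq_norm_sq, real_inner_self_eq_norm_sq]
  ring
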